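/- Let V be a finite subgroup of (F, +) of rank 3. Then: (i) there exist α ∈ F^× and a subfield K ⊆ F with p^2 elements such that α•K ⊆ V (i.e., the partition λ(V) equals (2,1)) if and only if d_{1,3}(V)^p · d_{2,3}(V) = d_{3,3}(V)^p; and (ii) V = α•K for some α ∈ F^× and some subfield K ⊆ F with p^3 elements (i.e., λ(V) = (3)) if and only if d_{1,3}(V) = 0 and d_{2,3}(V) = 0. -/

import Mathlib

open Polynomial Pointwise

/-- `dCoef p r i E` is the Dickson-type coefficient `d_{i,r}(E)`: the coefficient of
`X ^ (p ^ (r - i))` in `∏_{c ∈ E} (X - c)`. -/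
noncomputable def dCoef {F : Type*} [Field F] (p r i : ℕ)
    (E : AddSubgroup F) [Fintype E] : F :=
  (∏ c : E, (X - C (c : F))).coeff (p ^ (r - i))

namespace Statement13Aux
open Finset
variable {F : Type*} [Field F] {p : ℕ} [hp : Fact p.Prime] [CharP F p]
set_option linter.unusedSectionVars false

lemma natCast_pow_char' (n : ℕ) : ((n : F))^p = (n : F) := by
  have h : (ZMod.castHom (dvd_refl p) F) ((n : ZMod p)) = (n : F) := map_natCast _ n
  rw [← h, ← map_pow, ZMod.pow_card]

lemma pow_p2 (x : F) : x^(p^2) = (x^p)^p := by rw [pow_two, pow_mul]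

lemma pow_p3 (x : F) : x^(p^3) = ((x^p)^p)^p := by
  have h : p^3 = p*p*p := by ring
  rw [h, pow_mul, pow_mul]

lemma natmul_mem {t : Finset F} (hsub : ∀ x ∈ t, ∀ y ∈ t, x - y ∈ t)
    {γ : F} (hγ : γ ∈ t) (n : ℕ) : (n : F) * γ ∈ t := by
  induction n with
  | zero => simpa using hsub γ hγ γ hγ
  | succ n ih =>
      have h0 : (0 : F) ∈ t := by simpa using hsub γ hγ γ hγ
      have hneg : -γ ∈ t := by simpa using hsub 0 h0 γ hγ
      have heq : ((n+1 : ℕ) : F) * γ = (n : F) * γ - (-γ) := by push_cast; ring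
      rw [heq]
      exact hsub _ ih _ hneg

lemma small_subgroup {t : Finset F} (hsub : ∀ x ∈ t, ∀ y ∈ t, x - y ∈ t)
    {γ : F} (hγ : γ ∈ t) (hγ0 : γ ≠ 0) (hcard : t.card ≤ p) :
    ∀ z ∈ t, z ^ p = γ ^ (p - 1) * z := by
  classical
  set T : Finset F := (Finset.range p).image (fun j : ℕ => (j : F) * γ) with hT
  have hTsub : T ⊆ t := by
    intro z hz
    simp only [hT, mem_image, mem_range] at hz
    obtain ⟨j, _, rfl⟩ := hz
    exact natmul_mem hsub hγ j
  have hTcard : T.card = p := by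
    rw [hT, Finset.card_image_of_injOn, Finset.card_range]
    intro i hi j hj h
    simp only [Finset.coe_range, Set.mem_Iio] at hi hj
    have h2 : (i : F) = (j : F) := mul_right_cancel₀ hγ0 h
    have := (CharP.natCast_eq_natCast F p).mp h2
    rwa [Nat.ModEq, Nat.mod_eq_of_lt hi, Nat.mod_eq_of_lt hj] at this
  have hteq : T = t := Finset.eq_of_subset_of_card_le hTsub (hcard.trans_eq hTcard.symm)
  intro z hz
  rw [← hteq] at hz
  simp only [hT, mem_image, mem_range] at hz
  obtain ⟨j, _, rfl⟩ := hz
  rw [mul_pow, natCast_pow_char']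
  have h3 : γ ^ p = γ ^ (p-1) * γ := by
    rw [← pow_succ]; congr 1; omega
  rw [h3]; ring

/-- Root-counting: a set on which `x ↦ x^q - a x` is constant `= b` has at most `q` elements. -/
lemma card_le_of_artin {q : ℕ} (hq1 : 1 < q) (a b : F) {s : Finset F}
    (hs : ∀ x ∈ s, x^q - a*x = b) : s.card ≤ q := by
  classical
  set g : F[X] := X^q - C a * X - C b with hg
  have hgne : g ≠ 0 := by
    intro h
    have hc : g.coeff q = 1 := by
      rw [hg]
      simp [coeff_sub, coeff_X_pow, coeff_C_mul, coeff_X, coeff_C, hq1.ne, hq1.ne',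
        (Nat.lt_of_lt_of_le Nat.zero_lt_one hq1.le).ne']
    rw [h] at hc
    simp at hc
  have hdeg : g.natDegree ≤ q := by
    refine le_trans (natDegree_sub_le _ _) ?_
    simp only [natDegree_C, max_eq_left (Nat.zero_le _)]
    refine le_trans (natDegree_sub_le _ _) ?_
    refine max_le (le_of_eq (natDegree_X_pow q)) ?_
    refine le_trans (natDegree_C_mul_le _ _) ?_
    simp [natDegree_X]; omega
  have hsubr : s ⊆ g.roots.toFinset := by
    intro x hx
    rw [Multiset.mem_toFinset, mem_roots hgne]
    have := hs x hx
    simp only [IsRoot.def, hg, eval_sub, eval_pow, eval_X, eval_mul, eval_C]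
    rw [this]; ring
  calc s.card ≤ g.roots.toFinset.card := Finset.card_le_card hsubr
    _ ≤ Multiset.card g.roots := Multiset.toFinset_card_le _
    _ ≤ g.natDegree := card_roots' g
    _ ≤ q := hdeg

/-- One Artin–Schreier quotient step. -/
lemma step [DecidableEq F] {s : Finset F} (hsub : ∀ x ∈ s, ∀ y ∈ s, x - y ∈ s)
    {γ : F} (hγ : γ ∈ s) (hγ0 : γ ≠ 0) :
    (∀ x ∈ s.image (fun x => x^p - γ^(p-1)*x), ∀ y ∈ s.image (fun x => x^p - γ^(p-1)*x),
        x - y ∈ s.image (fun x => x^p - γ^(p-1)*x)) ∧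
      s.card = p * (s.image (fun x => x^p - γ^(p-1)*x)).card := by
  classical
  have h1 : 1 < p := hp.out.one_lt
  set a := γ^(p-1) with ha
  set φ : F → F := fun x => x^p - a*x with hφ
  have hadd : ∀ x y : F, φ (x - y) = φ x - φ y := by
    intro x y
    simp only [hφ]
    rw [sub_pow_char]
    ring
  have hadd2 : ∀ x y : F, φ (x + y) = φ x + φ y := by
    intro x y
    simp only [hφ]
    rw [add_pow_char]
    ring
  have hφγ : φ γ = 0 := by
    simp only [hφ, ha]
    have : γ ^ p = γ^(p-1) * γ := by rw [← pow_succ]; congr 1; omega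
    rw [this]; ring
  have hφnat : ∀ (n : ℕ) (x : F), φ ((n:F) * x) = (n:F) * φ x := by
    intro n x
    simp only [hφ]
    rw [mul_pow, natCast_pow_char']
    ring
  constructor
  · intro x hx y hy
    simp only [mem_image] at hx hy ⊢
    obtain ⟨u, hu, rfl⟩ := hx
    obtain ⟨v, hv, rfl⟩ := hy
    exact ⟨u - v, hsub u hu v hv, hadd u v⟩
  · apply le_antisymm
    · apply Finset.card_le_mul_card_image
      intro b _
      apply card_le_of_artin h1 a b
      intro x hx
      simp only [mem_filter, hφ] at hx
      exact hx.2
    · apply Finset.mul_card_image_le_card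
      intro b hb
      simp only [mem_image] at hb
      obtain ⟨v, hv, rfl⟩ := hb
      have h0 : (0:F) ∈ s := by simpa using hsub γ hγ γ hγ
      have hc : (Finset.range p).card ≤ #{x ∈ s | φ x = φ v} := by
        apply Finset.card_le_card_of_injOn (fun j : ℕ => v + (j:F)*γ)
        · intro j hj
          simp only [mem_coe, mem_range] at hj ⊢
          rw [mem_filter]
          constructor
          · have hjγ : (j:F)*γ ∈ s := natmul_mem hsub hγ j
            have : v + (j:F)*γ = v - (0 - (j:F)*γ) := by ring
            rw [this]
            exact hsub v hv _ (hsub 0 h0 _ hjγ)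
          · have heq : φ (v + (j:F)*γ) = φ v := by
              rw [hadd2, hφnat, hφγ]; ring
            simpa [hφ] using heq
        · intro i hi j hj h
          simp only [coe_range, Set.mem_Iio] at hi hj
          simp only [add_right_inj] at h
          have h2 : (i : F) = (j : F) := mul_right_cancel₀ hγ0 h
          have := (CharP.natCast_eq_natCast F p).mp h2
          rwa [Nat.ModEq, Nat.mod_eq_of_lt hi, Nat.mod_eq_of_lt hj] at this
      simpa using hc

lemma prod_eq_of_monic (V : AddSubgroup F) [Fintype V] (P : F[X])
    (hm : P.Monic) (hd : P.natDegree = Fintype.card V)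
    (hr : ∀ v : V, P.eval (v : F) = 0) :
    ∏ c : V, (X - C (c : F)) = P := by
  classical
  set Q : F[X] := ∏ c : V, (X - C (c : F)) with hQ
  have hQm : Q.Monic := monic_prod_of_monic _ _ fun c _ => monic_X_sub_C _
  have hQd : Q.natDegree = Fintype.card V := by
    rw [hQ, natDegree_prod]
    · simp [natDegree_X_sub_C]
    · intro c _; exact X_sub_C_ne_zero _
  have hQr : ∀ v : V, Q.eval (v : F) = 0 := by
    intro v
    rw [hQ, eval_prod]
    exact Finset.prod_eq_zero (Finset.mem_univ v) (by simp)
  have hsub : P - Q = 0 := by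
    by_cases h0 : P - Q = 0
    · exact h0
    · exfalso
      have hdeg : (P - Q).natDegree < Fintype.card V := by
        have hdlt : (P - Q).degree < P.degree := by
          apply degree_sub_lt
          · rw [degree_eq_natDegree hm.ne_zero, degree_eq_natDegree hQm.ne_zero, hd, hQd]
          · exact hm.ne_zero
          · rw [hm.leadingCoeff, hQm.leadingCoeff]
        have : (P - Q).degree < (Fintype.card V : WithBot ℕ) := by
          rwa [degree_eq_natDegree hm.ne_zero, hd] at hdlt
        exact (natDegree_lt_iff_degree_lt h0).mpr this
      have := eq_zero_of_natDegree_lt_card_of_eval_eq_zero (P - Q)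
        (Subtype.val_injective : Function.Injective ((↑) : V → F))
        (fun v => by simp [hr v, hQr v]) hdeg
      exact h0 this
  have := sub_eq_zero.mp hsub
  rw [this]

lemma comp_eval (a b c x : F) :
    ((x^p - a*x)^p - b*(x^p - a*x))^p - c*((x^p - a*x)^p - b*(x^p - a*x)) =
      ((x^p)^p)^p + (-((a^p+b)^p + c)) * ((x^p)^p)
        + ((a*b)^p + c*(a^p+b)) * (x^p) + (-(a*b*c)) * x := by
  have h1 : (x^p - a*x)^p = (x^p)^p - a^p * x^p := by
    rw [sub_pow_char, mul_pow]
  rw [h1]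
  have h2 : ((x^p)^p - a^p * x^p - b*(x^p - a*x))^p
      = ((x^p)^p)^p - (a^p)^p * (x^p)^p - b^p * ((x^p)^p - a^p * x^p) := by
    rw [sub_pow_char, sub_pow_char, mul_pow, mul_pow, h1]
  rw [h2]
  have h3 : (a^p+b)^p = (a^p)^p + b^p := by rw [add_pow_char]
  have h4 : (a*b)^p = a^p * b^p := mul_pow a b p
  rw [h3, h4]
  ring

lemma comp2_eval (a b x : F) :
    (x^(p^2) - a*x)^p - b*(x^(p^2) - a*x) =
      x^(p^3) + (-b) * x^(p^2) + (-(a^p)) * x^p + (a*b) * x := by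
  rw [pow_p2 x, pow_p3 x, sub_pow_char, mul_pow]
  ring

lemma Qdeg (d1 d2 d3 : F) :
    (C d1*X^(p^2) + C d2*X^p + C d3*X : F[X]).degree < (p^3 : ℕ) := by
  have h1 : 1 < p := hp.out.one_lt
  have h2 : p^2 < p^3 := Nat.pow_lt_pow_right h1 (by norm_num)
  have h3 : p < p^2 := by nlinarith
  have hle : ∀ (d : F) (k : ℕ), k ≤ p^2 → (C d * X^k : F[X]).degree < (p^3 : ℕ) := by
    intro d k hk
    calc (C d * X^k : F[X]).degree ≤ (k : WithBot ℕ) := degree_C_mul_X_pow_le k d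
      _ < ((p^3 : ℕ) : WithBot ℕ) := by exact_mod_cast lt_of_le_of_lt hk h2
  calc (C d1*X^(p^2) + C d2*X^p + C d3*X : F[X]).degree
      ≤ max (C d1*X^(p^2) + C d2*X^p : F[X]).degree (C d3*X : F[X]).degree := by
        apply degree_add_le
    _ < (p^3 : ℕ) := by
        apply max_lt
        · calc (C d1*X^(p^2) + C d2*X^p : F[X]).degree
              ≤ max (C d1*X^(p^2) : F[X]).degree (C d2*X^p : F[X]).degree := degree_add_le _ _
            _ < (p^3 : ℕ) := max_lt (hle d1 _ le_rfl) (hle d2 _ h3.le)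
        · simpa using hle d3 1 (by nlinarith)

lemma Pmonic (d1 d2 d3 : F) :
    (X^(p^3) + C d1*X^(p^2) + C d2*X^p + C d3*X : F[X]).Monic := by
  have h : (X^(p^3) + C d1*X^(p^2) + C d2*X^p + C d3*X : F[X])
      = X^(p^3) + (C d1*X^(p^2) + C d2*X^p + C d3*X) := by ring
  rw [h]
  exact monic_X_pow_add (Qdeg d1 d2 d3)

lemma Pdeg (d1 d2 d3 : F) :
    (X^(p^3) + C d1*X^(p^2) + C d2*X^p + C d3*X : F[X]).natDegree = p^3 := by
  have h : (X^(p^3) + C d1*X^(p^2) + C d2*X^p + C d3*X : F[X])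
      = X^(p^3) + (C d1*X^(p^2) + C d2*X^p + C d3*X) := by ring
  rw [h]
  have hd : (X^(p^3) + (C d1*X^(p^2) + C d2*X^p + C d3*X) : F[X]).degree = (p^3 : ℕ) := by
    rw [add_comm]
    rw [degree_add_eq_right_of_degree_lt]
    · exact degree_X_pow _
    · rw [degree_X_pow]; exact Qdeg d1 d2 d3
  exact natDegree_eq_of_degree_eq_some hd

lemma Pcoeff (d1 d2 d3 : F) :
    (X^(p^3) + C d1*X^(p^2) + C d2*X^p + C d3*X : F[X]).coeff (p^2) = d1 ∧
    (X^(p^3) + C d1*X^(p^2) + C d2*X^p + C d3*X : F[X]).coeff p = d2 ∧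
    (X^(p^3) + C d1*X^(p^2) + C d2*X^p + C d3*X : F[X]).coeff 1 = d3 := by
  have h1 : 1 < p := hp.out.one_lt
  have h2 : p^2 < p^3 := Nat.pow_lt_pow_right h1 (by norm_num)
  have h3 : p < p^2 := by nlinarith
  refine ⟨?_, ?_, ?_⟩ <;>
    simp [coeff_add, coeff_C_mul, coeff_X_pow, coeff_X, h2.ne, h3.ne, (h3.trans h2).ne,
      (h1.trans h3).ne, h1.ne, (h1.trans (h3.trans h2)).ne, h2.ne', h3.ne', h1.ne',
      (h3.trans h2).ne', (h1.trans h3).ne', (h1.trans (h3.trans h2)).ne']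

lemma Peval (d1 d2 d3 x : F) :
    (X^(p^3) + C d1*X^(p^2) + C d2*X^p + C d3*X : F[X]).eval x
      = x^(p^3) + d1*x^(p^2) + d2*x^p + d3*x := by
  simp

lemma key (V : AddSubgroup F) [Fintype V] (hV : Fintype.card V = p ^ 3) :
    ∃ d1 d2 d3 : F, d3 ≠ 0 ∧
      (∏ c : V, (X - C (c : F))) = X^(p^3) + C d1*X^(p^2) + C d2*X^p + C d3*X := by
  classical
  have h1 : 1 < p := hp.out.one_lt
  have hp3 : 1 < p^3 := Nat.one_lt_pow (by norm_num) h1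
  have hp2 : 1 < p^2 := Nat.one_lt_pow (by norm_num) h1
  set s : Finset F := Finset.univ.image ((↑) : V → F) with hs
  have hmem : ∀ x : F, x ∈ s ↔ x ∈ V := by
    intro x
    constructor
    · intro hx
      simp only [hs, mem_image, mem_univ, true_and] at hx
      obtain ⟨a, rfl⟩ := hx
      exact a.2
    · intro hx
      simp only [hs, mem_image, mem_univ, true_and]
      exact ⟨⟨x, hx⟩, rfl⟩
  have hcard : s.card = p^3 := by
    rw [hs, Finset.card_image_of_injective _ Subtype.val_injective, card_univ, hV]
  have hsub : ∀ x ∈ s, ∀ y ∈ s, x - y ∈ s := by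
    intro x hx y hy
    rw [hmem] at hx hy ⊢
    exact sub_mem hx hy
  obtain ⟨γ1, hγ1, hγ10⟩ := Finset.exists_mem_ne (by rw [hcard]; exact hp3) (0 : F)
  obtain ⟨hsub1, hcard1⟩ := step (p := p) hsub hγ1 hγ10
  have ht1card : (s.image (fun x => x^p - γ1^(p-1)*x)).card = p^2 := by
    have h := hcard1
    rw [hcard] at h
    have : p * (s.image (fun x => x^p - γ1^(p-1)*x)).card = p * p^2 := by
      rw [← h]; ring
    exact Nat.eq_of_mul_eq_mul_left (by omega) this
  obtain ⟨γ2, hγ2, hγ20⟩ := Finset.exists_mem_ne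
    (by rw [ht1card]; exact hp2) (0 : F)
  obtain ⟨hsub2, hcard2⟩ := step (p := p) hsub1 hγ2 hγ20
  have ht2card : (((s.image (fun x => x^p - γ1^(p-1)*x))).image
      (fun x => x^p - γ2^(p-1)*x)).card = p := by
    have h := hcard2
    rw [ht1card] at h
    have : p * ((((s.image (fun x => x^p - γ1^(p-1)*x))).image
        (fun x => x^p - γ2^(p-1)*x)).card) = p * p := by
      rw [← h]; ring
    exact Nat.eq_of_mul_eq_mul_left (by omega) this
  obtain ⟨γ3, hγ3, hγ30⟩ := Finset.exists_mem_ne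
    (by rw [ht2card]; exact h1) (0 : F)
  have hkill := small_subgroup hsub2 hγ3 hγ30 (le_of_eq ht2card)
  have ha0 : γ1^(p-1) ≠ 0 := pow_ne_zero _ hγ10
  have hb0 : γ2^(p-1) ≠ 0 := pow_ne_zero _ hγ20
  have hc0 : γ3^(p-1) ≠ 0 := pow_ne_zero _ hγ30
  refine ⟨-((( γ1^(p-1))^p + γ2^(p-1))^p + γ3^(p-1)),
      ((γ1^(p-1))*(γ2^(p-1)))^p + γ3^(p-1)*((γ1^(p-1))^p + γ2^(p-1)),
      -((γ1^(p-1))*(γ2^(p-1))*(γ3^(p-1))), ?_, ?_⟩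
  · exact neg_ne_zero.mpr (mul_ne_zero (mul_ne_zero ha0 hb0) hc0)
  · apply prod_eq_of_monic V _ (Pmonic _ _ _) (by rw [Pdeg, hV])
    intro v
    rw [Peval (p := p)]
    have hv : (v : F) ∈ s := (hmem v).mpr v.2
    have h2 : ((v:F)^p - γ1^(p-1)*(v:F)) ∈ s.image (fun x => x^p - γ1^(p-1)*x) :=
      mem_image_of_mem _ hv
    have h3 : (((v:F)^p - γ1^(p-1)*(v:F))^p - γ2^(p-1)*((v:F)^p - γ1^(p-1)*(v:F)))
        ∈ ((s.image (fun x => x^p - γ1^(p-1)*x))).image (fun x => x^p - γ2^(p-1)*x) :=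
      mem_image_of_mem _ h2
    have h4 := hkill _ h3
    rw [pow_p3, pow_p2, ← comp_eval]
    rw [sub_eq_zero]
    exact h4


/-- The subfield of fixed points of the `n`-th Frobenius power. -/
def frobSubfield (F : Type*) [Field F] (p : ℕ) [hp : Fact p.Prime] [CharP F p]
    (n : ℕ) : Subfield F where
  carrier := {x : F | x^(p^n) = x}
  mul_mem' := by
    intro a b ha hb
    simp only [Set.mem_setOf_eq] at *
    rw [mul_pow, ha, hb]
  one_mem' := by simp
  add_mem' := by
    intro a b ha hb
    simp only [Set.mem_setOf_eq] at *
    rw [add_pow_char_pow, ha, hb]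
  zero_mem' := by
    have : p^n ≠ 0 := pow_ne_zero n hp.out.pos.ne'
    simp [zero_pow this]
  neg_mem' := by
    intro a ha
    simp only [Set.mem_setOf_eq] at *
    rw [neg_pow, neg_one_pow_char_pow, ha]
    ring
  inv_mem' := by
    intro a ha
    simp only [Set.mem_setOf_eq] at *
    rw [inv_pow, ha]

lemma mem_frobSubfield {n : ℕ} {x : F} :
    x ∈ frobSubfield F p n ↔ x^(p^n) = x := Iff.rfl

/-- Cardinality of the Frobenius-fixed subfield via a dilation bijection. -/
lemma card_frob (n : ℕ) {s : Finset F} {α : F} (hα : α ≠ 0)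
    (hbij : ∀ x : F, x^(p^n) = x ↔ α*x ∈ s) :
    Nat.card (frobSubfield F p n) = s.card := by
  have e : frobSubfield F p n ≃ {y // y ∈ s} :=
    { toFun := fun x => ⟨α * x.1, (hbij x.1).mp x.2⟩
      invFun := fun y => ⟨α⁻¹ * y.1, by
        rw [mem_frobSubfield]
        apply (hbij (α⁻¹ * y.1)).mpr
        rw [← mul_assoc, mul_inv_cancel₀ hα, one_mul]
        exact y.2⟩
      left_inv := fun x => by
        ext
        simp only
        field_simp
      right_inv := fun y => by
        ext
        simp only
        field_simp }
  rw [Nat.card_congr e, Nat.card_eq_finsetCard]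

lemma exists_mem_ne_zero (V : AddSubgroup F) [Fintype V]
    (h : 1 < Fintype.card V) : ∃ x : F, x ∈ V ∧ x ≠ 0 := by
  classical
  have hcard : 1 < (Finset.univ.image ((↑) : V → F)).card := by
    rwa [Finset.card_image_of_injective _ Subtype.val_injective, card_univ]
  obtain ⟨x, hx, hx0⟩ := Finset.exists_mem_ne hcard (0 : F)
  simp only [mem_image, mem_univ, true_and] at hx
  obtain ⟨a, rfl⟩ := hx
  exact ⟨a, a.2, hx0⟩


lemma Vfinset (V : AddSubgroup F) [Fintype V] [DecidableEq F] :
    (∀ x : F, x ∈ Finset.univ.image ((↑) : V → F) ↔ x ∈ V) ∧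
    (Finset.univ.image ((↑) : V → F)).card = Fintype.card V ∧
    (∀ x ∈ Finset.univ.image ((↑) : V → F), ∀ y ∈ Finset.univ.image ((↑) : V → F),
       x - y ∈ Finset.univ.image ((↑) : V → F)) := by
  have hmem : ∀ x : F, x ∈ Finset.univ.image ((↑) : V → F) ↔ x ∈ V := by
    intro x
    constructor
    · intro hx
      simp only [mem_image, mem_univ, true_and] at hx
      obtain ⟨a, rfl⟩ := hx
      exact a.2
    · intro hx
      simp only [mem_image, mem_univ, true_and]
      exact ⟨⟨x, hx⟩, rfl⟩
  refine ⟨hmem, ?_, ?_⟩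
  · rw [Finset.card_image_of_injective _ Subtype.val_injective, card_univ]
  · intro x hx y hy
    rw [hmem] at hx hy ⊢
    exact sub_mem hx hy

theorem main (V : AddSubgroup F) [Fintype V] (hV : Fintype.card V = p ^ 3) :
    ((∃ α : F, α ≠ 0 ∧ ∃ K : Subfield F, Nat.card K = p ^ 2 ∧ ∀ x ∈ K, α * x ∈ V) ↔
      dCoef p 3 1 V ^ p * dCoef p 3 2 V = dCoef p 3 3 V ^ p) ∧
    ((∃ α : F, α ≠ 0 ∧ ∃ K : Subfield F, Nat.card K = p ^ 3 ∧
        (V : Set F) = α • (K : Set F)) ↔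
      (dCoef p 3 1 V = 0 ∧ dCoef p 3 2 V = 0)) := by
  classical
  obtain ⟨d1, d2, d3, hd3, hprod⟩ := key V hV
  have h1 : 1 < p := hp.out.one_lt
  have hp2 : 1 < p^2 := Nat.one_lt_pow (by norm_num) h1
  have hp3 : 1 < p^3 := Nat.one_lt_pow (by norm_num) h1
  have e1 : p^(3-1) = p^2 := by norm_num
  have e2 : p^(3-2) = p := by norm_num
  have e3 : p^(3-3) = 1 := by norm_num
  have hd1 : dCoef p 3 1 V = d1 := by
    rw [dCoef, hprod, e1]; exact (Pcoeff d1 d2 d3).1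
  have hd2 : dCoef p 3 2 V = d2 := by
    rw [dCoef, hprod, e2]; exact (Pcoeff d1 d2 d3).2.1
  have hd3c : dCoef p 3 3 V = d3 := by
    rw [dCoef, hprod, e3]; exact (Pcoeff d1 d2 d3).2.2
  have hmemV : ∀ x : F, x ∈ V ↔ x^(p^3) + d1*x^(p^2) + d2*x^p + d3*x = 0 := by
    intro x
    have he : (∏ c : V, (X - C (c : F))).eval x
        = x^(p^3) + d1*x^(p^2) + d2*x^p + d3*x := by
      rw [hprod, Peval]
    rw [← he, Polynomial.eval_prod]
    constructor
    · intro hx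
      exact Finset.prod_eq_zero (Finset.mem_univ (⟨x, hx⟩ : V)) (by simp)
    · intro hx
      obtain ⟨c, -, hc⟩ := Finset.prod_eq_zero_iff.mp hx
      simp only [Polynomial.eval_sub, Polynomial.eval_X, Polynomial.eval_C] at hc
      have hxc : x = (c : F) := sub_eq_zero.mp hc
      rw [hxc]
      exact c.2
  obtain ⟨hmemS, hcardS, hsubS⟩ := Vfinset V
  set s : Finset F := Finset.univ.image ((↑) : V → F) with hs
  have hscard : s.card = p^3 := by rw [hcardS, hV]
  constructor
  · constructor
    · -- (i) forward
      rintro ⟨α, hα, K, hK, hKV⟩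
      have hfinK : Finite K := Nat.finite_of_card_ne_zero (by rw [hK]; positivity)
      letI : Fintype K := Fintype.ofFinite K
      have hqK : Fintype.card K = p^2 := by rw [← Nat.card_eq_fintype_card, hK]
      have hxK : ∀ x ∈ K, x^(p^2) = x := by
        intro x hx
        have h := FiniteField.pow_card (⟨x, hx⟩ : K)
        rw [hqK] at h
        simpa using congrArg Subtype.val h
      set a := α^(p^2-1) with ha
      have hαa : α^(p^2) = a*α := by rw [ha, ← pow_succ]; congr 1; omega
      have hψK : ∀ x ∈ K, (α*x)^(p^2) - a*(α*x) = 0 := by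
        intro x hx
        rw [mul_pow, hxK x hx, hαa]; ring
      set u : Finset F := s.image (fun x => x^(p^2) - a*x) with hu
      have hψadd : ∀ x y : F, (x+y)^(p^2) - a*(x+y) = (x^(p^2) - a*x) + (y^(p^2) - a*y) := by
        intro x y
        rw [add_pow_char_pow]
        ring
      have hψsub : ∀ x y : F, (x-y)^(p^2) - a*(x-y) = (x^(p^2) - a*x) - (y^(p^2) - a*y) := by
        intro x y
        rw [sub_pow_char_pow]
        ring
      have hup : p^2 * u.card ≤ s.card := by
        apply Finset.mul_card_image_le_card
        intro z hz
        simp only [mem_image] at hz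
        obtain ⟨v, hv, rfl⟩ := hz
        have hsK : (Finset.univ.image (fun k : K => α*(k : F))).card = p^2 := by
          rw [Finset.card_image_of_injective, card_univ, hqK]
          intro k1 k2 hk
          exact Subtype.val_injective (mul_left_cancel₀ hα hk)
        refine le_trans (le_of_eq hsK.symm) ?_
        apply Finset.card_le_card_of_injOn (fun x => v + x)
        · intro x hx
          simp only [mem_coe, mem_image, mem_univ, true_and] at hx ⊢
          obtain ⟨k, rfl⟩ := hx
          rw [mem_filter]
          refine ⟨?_, ?_⟩
          · rw [hmemS] at hv ⊢
            exact add_mem hv (hKV k k.2)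
          · show (v + α*(k:F))^(p^2) - a*(v + α*(k:F)) = v^(p^2) - a*v
            rw [hψadd, hψK k k.2]; ring
        · intro x _ y _ hxy
          simpa using hxy
      have hucard : u.card ≤ p := by
        rw [hscard] at hup
        have : p^2 * u.card ≤ p^2 * p := by nlinarith [hup]
        exact Nat.le_of_mul_le_mul_left this (by positivity)
      have hune : ∃ γ, γ ∈ u ∧ γ ≠ 0 := by
        by_contra hcon
        push_neg at hcon
        have hall : ∀ x ∈ s, x^(p^2) - a*x = 0 := by
          intro x hx
          exact hcon _ (mem_image_of_mem _ hx)
        have := card_le_of_artin hp2 a 0 hall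
        rw [hscard] at this
        have h23 : p^2 < p^3 := Nat.pow_lt_pow_right h1 (by norm_num)
        omega
      obtain ⟨γ, hγu, hγ0⟩ := hune
      have husub : ∀ x ∈ u, ∀ y ∈ u, x - y ∈ u := by
        intro x hx y hy
        simp only [hu, mem_image] at hx hy ⊢
        obtain ⟨x', hx', rfl⟩ := hx
        obtain ⟨y', hy', rfl⟩ := hy
        exact ⟨x' - y', hsubS x' hx' y' hy', hψsub x' y'⟩
      have hkill := small_subgroup husub hγu hγ0 hucard
      set b := γ^(p-1) with hb
      have hQ : ∏ c : V, (X - C (c : F))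
          = X^(p^3) + C (-b)*X^(p^2) + C (-(a^p))*X^p + C (a*b)*X := by
        apply prod_eq_of_monic V _ (Pmonic _ _ _) (by rw [Pdeg, hV])
        intro v
        rw [Peval (p := p)]
        rw [← comp2_eval (p := p) a b (v : F)]
        have hvu : ((v:F)^(p^2) - a*(v:F)) ∈ u := by
          apply mem_image_of_mem
          exact (hmemS _).mpr v.2
        rw [sub_eq_zero]
        exact hkill _ hvu
      have hD1 : d1 = -b := by rw [← hd1, dCoef, hQ, e1]; exact (Pcoeff _ _ _).1
      have hD2 : d2 = -(a^p) := by rw [← hd2, dCoef, hQ, e2]; exact (Pcoeff _ _ _).2.1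
      have hD3 : d3 = a*b := by rw [← hd3c, dCoef, hQ, e3]; exact (Pcoeff _ _ _).2.2
      rw [hd1, hd2, hd3c, hD1, hD2, hD3]
      rw [neg_pow, neg_one_pow_char, mul_pow]
      ring
    · -- (i) backward
      intro hrel0
      rw [hd1, hd2, hd3c] at hrel0
      have hd1ne : d1 ≠ 0 := by
        intro h
        rw [h] at hrel0
        have hpne : p ≠ 0 := by omega
        rw [zero_pow hpne, zero_mul] at hrel0
        exact hd3 (pow_eq_zero_iff hpne |>.mp hrel0.symm)
      set a' := -d3/d1 with ha'
      set b' := -d1 with hb'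
      have ha'0 : a' ≠ 0 := by
        rw [ha']
        exact div_ne_zero (neg_ne_zero.mpr hd3) hd1ne
      have hb'0 : b' ≠ 0 := neg_ne_zero.mpr hd1ne
      have key1 : -(a'^p) = d2 := by
        rw [ha', div_pow, neg_pow, neg_one_pow_char, ← hrel0]
        field_simp
      have key2 : a'*b' = d3 := by
        rw [ha', hb']
        field_simp
      have hprod2 : ∏ c : V, (X - C (c : F))
          = X^(p^3) + C (-b')*X^(p^2) + C (-(a'^p))*X^p + C (a'*b')*X := by
        rw [hprod, key1, key2, hb', neg_neg]
      have hmem2 : ∀ x : F, x ∈ V ↔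
          (x^(p^2) - a'*x)^p - b'*(x^(p^2) - a'*x) = 0 := by
        intro x
        have hcc := comp2_eval (p := p) a' b' x
        rw [key1, key2] at hcc
        have hb'' : -b' = d1 := by rw [hb', neg_neg]
        rw [hb''] at hcc
        rw [hmemV x, ← hcc]
      set W : Finset F := s.filter (fun x => x^(p^2) - a'*x = 0) with hW
      have hWmem : ∀ x : F, x ∈ W ↔ x^(p^2) - a'*x = 0 := by
        intro x
        rw [hW, mem_filter]
        constructor
        · exact fun h => h.2
        · intro h
          refine ⟨?_, h⟩
          rw [hmemS, hmem2, h]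
          simp [zero_pow (show p ≠ 0 by omega)]
      have hWle : W.card ≤ p^2 := by
        apply card_le_of_artin hp2 a' 0
        intro x hx
        exact (hWmem x).mp hx
      set u' : Finset F := s.image (fun x => x^(p^2) - a'*x) with hu'
      have hu'le : u'.card ≤ p := by
        apply card_le_of_artin h1 b' 0
        intro z hz
        simp only [hu', mem_image] at hz
        obtain ⟨v, hv, rfl⟩ := hz
        rw [hmemS, hmem2] at hv
        exact hv
      have hslb : s.card ≤ W.card * u'.card := by
        apply Finset.card_le_mul_card_image
        intro z hz
        simp only [mem_image] at hz
        obtain ⟨v, hv, rfl⟩ := hz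
        apply Finset.card_le_card_of_injOn (fun x => x - v)
        · intro x hx
          rw [mem_coe, mem_filter] at hx
          have hxv : x^(p^2) - a'*x = v^(p^2) - a'*v := hx.2
          rw [mem_coe, hWmem, sub_pow_char_pow]
          linear_combination hxv
        · intro x _ y _ hxy
          simpa using hxy
      have hWge : p^2 ≤ W.card := by
        rw [hscard] at hslb
        have h3 : p^3 ≤ W.card * p := le_trans hslb (Nat.mul_le_mul_left _ hu'le)
        have : p^2 * p ≤ W.card * p := by nlinarith
        exact Nat.le_of_mul_le_mul_right this (by omega)
      have hWcard : W.card = p^2 := le_antisymm hWle hWge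
      obtain ⟨α, hαW, hα0⟩ := Finset.exists_mem_ne (by rw [hWcard]; exact hp2) (0 : F)
      have hαe : α^(p^2) = a'*α := by
        have := (hWmem α).mp hαW
        linear_combination this
      refine ⟨α, hα0, frobSubfield F p 2, ?_, ?_⟩
      · have hbij : ∀ x : F, x^(p^2) = x ↔ α*x ∈ W := by
          intro x
          rw [hWmem]
          constructor
          · intro h
            rw [mul_pow, h, hαe]
            ring
          · intro h
            rw [mul_pow, hαe] at h
            have : a'*α*(x^(p^2)) = a'*α*x := by linear_combination h
            exact mul_left_cancel₀ (mul_ne_zero ha'0 hα0) this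
        rw [card_frob 2 hα0 hbij, hWcard]
      · intro x hx
        rw [mem_frobSubfield] at hx
        have : α*x ∈ W := by
          rw [hWmem, mul_pow, hx, hαe]
          ring
        rw [← hmemS]
        rw [hW, mem_filter] at this
        exact this.1
  · constructor
    · -- (ii) forward
      rintro ⟨α, hα, K, hK, hVK⟩
      have hfinK : Finite K := Nat.finite_of_card_ne_zero (by rw [hK]; positivity)
      letI : Fintype K := Fintype.ofFinite K
      have hqK : Fintype.card K = p^3 := by rw [← Nat.card_eq_fintype_card, hK]
      have hxK : ∀ x ∈ K, x^(p^3) = x := by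
        intro x hx
        have h := FiniteField.pow_card (⟨x, hx⟩ : K)
        rw [hqK] at h
        simpa using congrArg Subtype.val h
      set a := α^(p^3-1) with ha
      have hαa : α^(p^3) = a*α := by rw [ha, ← pow_succ]; congr 1; omega
      have hQ : ∏ c : V, (X - C (c : F))
          = X^(p^3) + C 0*X^(p^2) + C 0*X^p + C (-a)*X := by
        apply prod_eq_of_monic V _ (Pmonic _ _ _) (by rw [Pdeg, hV])
        intro v
        rw [Peval (p := p)]
        have hvmem : (v : F) ∈ α • (K : Set F) := by
          rw [← hVK]
          exact v.2
        obtain ⟨y, hy, hyx⟩ := Set.mem_smul_set.mp hvmem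
        rw [smul_eq_mul] at hyx
        rw [← hyx, mul_pow, hxK y hy, hαa]
        ring
      constructor
      · rw [dCoef, hQ, e1]; exact (Pcoeff _ _ _).1
      · rw [dCoef, hQ, e2]; exact (Pcoeff _ _ _).2.1
    · -- (ii) backward
      rintro ⟨hz1, hz2⟩
      have hd1z : d1 = 0 := by rw [← hd1]; exact hz1
      have hd2z : d2 = 0 := by rw [← hd2]; exact hz2
      have hmem3 : ∀ x : F, x ∈ V ↔ x^(p^3) = -d3*x := by
        intro x
        rw [hmemV x, hd1z, hd2z]
        constructor
        · intro h; linear_combination h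
        · intro h; linear_combination h
      obtain ⟨α, hαV, hα0⟩ := exists_mem_ne_zero V (by rw [hV]; exact hp3)
      have hαp : α^(p^3) = -d3*α := (hmem3 α).mp hαV
      have hnd3α : -d3*α ≠ 0 := mul_ne_zero (neg_ne_zero.mpr hd3) hα0
      refine ⟨α, hα0, frobSubfield F p 3, ?_, ?_⟩
      · have hbij : ∀ x : F, x^(p^3) = x ↔ α*x ∈ s := by
          intro x
          rw [hmemS, hmem3]
          constructor
          · intro h
            rw [mul_pow, h, hαp]
            ring
          · intro h
            rw [mul_pow, hαp] at h
            have h2 : (-d3*α)*(x^(p^3)) = (-d3*α)*x := by linear_combination h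
            exact mul_left_cancel₀ hnd3α h2
        rw [card_frob 3 hα0 hbij, hscard]
      · ext x
        rw [SetLike.mem_coe, Set.mem_smul_set]
        constructor
        · intro hx
          refine ⟨α⁻¹*x, ?_, by rw [smul_eq_mul]; field_simp⟩
          rw [SetLike.mem_coe, mem_frobSubfield]
          have hx3 := (hmem3 x).mp hx
          have e : (α⁻¹*x)^(p^3) = (α^(p^3))⁻¹ * x^(p^3) := by rw [mul_pow, inv_pow]
          rw [e, hαp, hx3]
          field_simp
        · rintro ⟨y, hy, rfl⟩
          rw [SetLike.mem_coe, mem_frobSubfield] at hy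
          rw [smul_eq_mul]
          rw [hmem3, mul_pow, hy, hαp]
          ring

end Statement13Aux

/-- For a finite subgroup `V` of rank `3`:
(i) `V` contains a dilation of a subfield with `p²` elements (i.e. `λ(V) = (2,1)`)
iff `d_{1,3}(V)^p d_{2,3}(V) = d_{3,3}(V)^p`; and
(ii) `V` is a dilation of a subfield with `p³` elements (i.e. `λ(V) = (3)`) iff
`d_{1,3}(V) = 0` and `d_{2,3}(V) = 0`. -/
theorem statement13 {F : Type*} [Field F] {p : ℕ} [Fact p.Prime] [CharP F p]
    (V : AddSubgroup F) [Fintype V] (hV : Fintype.card V = p ^ 3) :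
    ((∃ α : F, α ≠ 0 ∧ ∃ K : Subfield F, Nat.card K = p ^ 2 ∧ ∀ x ∈ K, α * x ∈ V) ↔
      dCoef p 3 1 V ^ p * dCoef p 3 2 V = dCoef p 3 3 V ^ p) ∧
    ((∃ α : F, α ≠ 0 ∧ ∃ K : Subfield F, Nat.card K = p ^ 3 ∧
        (V : Set F) = α • (K : Set F)) ↔
      (dCoef p 3 1 V = 0 ∧ dCoef p 3 2 V = 0)) :=
  Statement13Aux.main V hV
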